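/- For each n ≥ 3, let G_n be the graph consisting of a clique K on ⌊(n−1)/2⌋ vertices together with ⌈(n+1)/2⌉ additional vertices, each adjacent to every vertex of K and to nothing else. Then G_n is chordal, has n vertices, and has exactly ⌈(n+1)/2⌉ maximal cliques, each of size ⌊(n+1)/2⌋. Consequently the sum of the sizes of the maximal cliques of G_n equals (n+1)²/4 if n is odd and ((n+1)²−1)/4 if n is even. -/

import Mathlib

/-- A graph is chordal if every (injectively embedded) cycle of length at least 4 has a
chord, i.e. two non-consecutive vertices of the cycle are adjacent. -/
def IsChordal {V : Type*} (G : SimpleGraph V) : Prop :=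
  ∀ m : ℕ, 4 ≤ m → ∀ f : ZMod m → V, Function.Injective f →
    (∀ i, G.Adj (f i) (f (i + 1))) →
    ∃ i j : ZMod m, i ≠ j ∧ j ≠ i + 1 ∧ i ≠ j + 1 ∧ G.Adj (f i) (f j)

/-- A maximal clique of a graph: a clique not properly contained in any other clique. -/
def IsMaxClique {V : Type*} (G : SimpleGraph V) (s : Finset V) : Prop :=
  G.IsClique (↑s : Set V) ∧ ∀ t : Finset V, G.IsClique (↑t : Set V) → s ⊆ t → s = t

open scoped Classical in
/-- The graph `G_n` on `n ≥ 3` vertices: a clique `K` on the `⌊(n-1)/2⌋` first vertices,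
plus `⌈(n+1)/2⌉` further vertices each adjacent exactly to all of `K`.  It is chordal, has
`n` vertices, and exactly `⌈(n+1)/2⌉` maximal cliques, each of size `⌊(n+1)/2⌋`; the sum of
the sizes of its maximal cliques is `(n+1)²/4` for odd `n` and `((n+1)²-1)/4` for even `n`. -/
theorem stmt_12 (n : ℕ) (hn : 3 ≤ n)
    (G : SimpleGraph (Fin n))
    (hG : G = SimpleGraph.fromRel (fun i j : Fin n => i.val < (n - 1) / 2 ∨ j.val < (n - 1) / 2)) :
    IsChordal G ∧ Fintype.card (Fin n) = n ∧
    (Finset.univ.filter (fun s : Finset (Fin n) => IsMaxClique G s)).card = (n + 2) / 2 ∧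
    (∀ s : Finset (Fin n), IsMaxClique G s → s.card = (n + 1) / 2) ∧
    (Odd n →
      (∑ s ∈ Finset.univ.filter (fun s : Finset (Fin n) => IsMaxClique G s), s.card) * 4
        = (n + 1) ^ 2) ∧
    (Even n →
      (∑ s ∈ Finset.univ.filter (fun s : Finset (Fin n) => IsMaxClique G s), s.card) * 4
        = (n + 1) ^ 2 - 1) := by
  classical
  subst hG
  set G : SimpleGraph (Fin n) :=
    SimpleGraph.fromRel (fun i j : Fin n => i.val < (n - 1) / 2 ∨ j.val < (n - 1) / 2) with hG
  set k := (n - 1) / 2 with hk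
  have hk1 : 1 ≤ k := by omega
  have hkn : k < n := by omega
  have hadj : ∀ i j : Fin n, G.Adj i j ↔ i ≠ j ∧ (i.val < k ∨ j.val < k) := by
    intro i j
    rw [hG, SimpleGraph.fromRel_adj]
    tauto
  set K : Finset (Fin n) := Finset.univ.filter (fun i => i.val < k) with hKdef
  have hmemK : ∀ i : Fin n, i ∈ K ↔ i.val < k := by
    intro i; simp [hKdef]
  have hKcard : K.card = k := by
    have : K = Finset.map ⟨Fin.castLE hkn.le, Fin.castLE_injective hkn.le⟩ Finset.univ := by
      ext i
      simp only [hmemK, Finset.mem_map, Finset.mem_univ, true_and,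
        Function.Embedding.coeFn_mk]
      constructor
      · intro h; exact ⟨⟨i.val, h⟩, by ext; simp⟩
      · rintro ⟨a, rfl⟩; exact a.isLt
    simp [this]
  -- characterization of maximal cliques
  have hmax : ∀ s : Finset (Fin n), IsMaxClique G s ↔ ∃ v ∉ K, s = insert v K := by
    intro s
    constructor
    · rintro ⟨hc, hm⟩
      have hKs : K ⊆ s := by
        have hcl : G.IsClique ((s ∪ K : Finset (Fin n)) : Set (Fin n)) := by
          intro a ha b hb hab
          simp only [Finset.coe_union, Set.mem_union, Finset.mem_coe] at ha hb
          rw [hadj]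
          refine ⟨hab, ?_⟩
          rcases ha with ha | ha
          · rcases hb with hb | hb
            · have := hc ha hb hab
              rw [hadj] at this
              exact this.2
            · right; exact (hmemK b).1 hb
          · left; exact (hmemK a).1 ha
        have := hm (s ∪ K) hcl Finset.subset_union_left
        rw [this]
        exact Finset.subset_union_right
      have hout : ∀ a ∈ s \ K, ∀ b ∈ s \ K, a = b := by
        intro a ha b hb
        by_contra hne
        simp only [Finset.mem_sdiff, hmemK] at ha hb
        have := hc ha.1 hb.1 hne
        rw [hadj] at this
        omega
      have hne : (s \ K).Nonempty := by
        by_contra h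
        rw [Finset.not_nonempty_iff_eq_empty, Finset.sdiff_eq_empty_iff_subset] at h
        have hsK : s = K := Finset.Subset.antisymm h hKs
        set v : Fin n := ⟨k, hkn⟩ with hv
        have hvK : v ∉ K := by simp [hmemK, hv]
        have hcl : G.IsClique ((insert v K : Finset (Fin n)) : Set (Fin n)) := by
          intro a ha b hb hab
          simp only [Finset.coe_insert, Set.mem_insert_iff, Finset.mem_coe, hmemK] at ha hb
          rw [hadj]
          refine ⟨hab, ?_⟩
          rcases ha with rfl | ha
          · rcases hb with rfl | hb
            · exact absurd rfl hab
            · right; exact hb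
          · left; exact ha
        have := hm (insert v K) hcl (by rw [hsK]; exact Finset.subset_insert _ _)
        have : v ∈ s := by rw [this]; exact Finset.mem_insert_self _ _
        rw [hsK] at this
        exact hvK this
      obtain ⟨v, hv⟩ := hne
      refine ⟨v, (Finset.mem_sdiff.1 hv).2, ?_⟩
      apply Finset.Subset.antisymm
      · intro a ha
        by_cases haK : a ∈ K
        · exact Finset.mem_insert_of_mem haK
        · have : a = v := hout a (Finset.mem_sdiff.2 ⟨ha, haK⟩) v hv
          rw [this]; exact Finset.mem_insert_self _ _
      · intro a ha
        rcases Finset.mem_insert.1 ha with rfl | haK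
        · exact (Finset.mem_sdiff.1 hv).1
        · exact hKs haK
    · rintro ⟨v, hvK, rfl⟩
      constructor
      · intro a ha b hb hab
        simp only [Finset.coe_insert, Set.mem_insert_iff, Finset.mem_coe, hmemK] at ha hb
        rw [hadj]
        refine ⟨hab, ?_⟩
        rcases ha with rfl | ha
        · rcases hb with rfl | hb
          · exact absurd rfl hab
          · right; exact hb
        · left; exact ha
      · intro t hcl hsub
        apply Finset.Subset.antisymm hsub
        intro w hw
        by_cases hwK : w ∈ K
        · exact Finset.mem_insert_of_mem hwK
        · by_cases hwv : w = v
          · rw [hwv]; exact Finset.mem_insert_self _ _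
          · exfalso
            have hvt : v ∈ t := hsub (Finset.mem_insert_self _ _)
            have := hcl hw hvt hwv
            rw [hadj] at this
            rw [hmemK] at hwK hvK
            omega
  -- the set of maximal cliques
  have hset : Finset.univ.filter (fun s : Finset (Fin n) => IsMaxClique G s)
      = Kᶜ.image (fun v => insert v K) := by
    ext s
    simp only [Finset.mem_filter, Finset.mem_univ, true_and, Finset.mem_image,
      Finset.mem_compl, hmax]
    constructor
    · rintro ⟨v, hv, rfl⟩; exact ⟨v, hv, rfl⟩
    · rintro ⟨v, hv, rfl⟩; exact ⟨v, hv, rfl⟩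
  have hcount : (Finset.univ.filter (fun s : Finset (Fin n) => IsMaxClique G s)).card
      = n - k := by
    rw [hset, Finset.card_image_of_injOn, Finset.card_compl, hKcard, Fintype.card_fin]
    intro a ha b hb hab
    simp only [Finset.mem_coe, Finset.mem_compl] at ha hb
    have hab' : insert a K = insert b K := hab
    have : a ∈ insert b K := by rw [← hab']; exact Finset.mem_insert_self _ _
    rcases Finset.mem_insert.1 this with h | h
    · exact h
    · exact absurd h ha
  have hsize : ∀ s : Finset (Fin n), IsMaxClique G s → s.card = k + 1 := by
    intro s hs
    obtain ⟨v, hv, rfl⟩ := (hmax s).1 hs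
    rw [Finset.card_insert_of_notMem hv, hKcard]
  have hsum : (∑ s ∈ Finset.univ.filter (fun s : Finset (Fin n) => IsMaxClique G s), s.card)
      = (n - k) * (k + 1) := by
    rw [Finset.sum_congr rfl (fun s hs => hsize s (Finset.mem_filter.1 hs).2),
      Finset.sum_const, smul_eq_mul, hcount]
  refine ⟨?_, by simp, by rw [hcount]; omega, ?_, ?_, ?_⟩
  · -- chordal
    intro m hm4 f hinj hcyc
    have hNZ : NeZero m := ⟨by omega⟩
    have h2 : (2 : ZMod m) ≠ 0 := by
      have : ((2 : ℕ) : ZMod m) ≠ 0 := by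
        rw [Ne, ZMod.natCast_eq_zero_iff]
        intro hd
        have := Nat.le_of_dvd (by norm_num) hd
        omega
      simpa using this
    have h1 : (1 : ZMod m) ≠ 0 := by
      have : ((1 : ℕ) : ZMod m) ≠ 0 := by
        rw [Ne, ZMod.natCast_eq_zero_iff]
        intro hd
        have := Nat.le_of_dvd (by norm_num) hd
        omega
      simpa using this
    have h3 : (3 : ZMod m) ≠ 0 := by
      have : ((3 : ℕ) : ZMod m) ≠ 0 := by
        rw [Ne, ZMod.natCast_eq_zero_iff]
        intro hd
        have := Nat.le_of_dvd (by norm_num) hd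
        omega
      simpa using this
    have key : ∀ i : ZMod m, (f i).val < k →
        ∃ i j : ZMod m, i ≠ j ∧ j ≠ i + 1 ∧ i ≠ j + 1 ∧ G.Adj (f i) (f j) := by
      intro i hi
      refine ⟨i, i + 2, fun h => h2 (by linear_combination -h),
        fun h => h1 (by linear_combination h),
        fun h => h3 (by linear_combination -h), ?_⟩
      rw [hadj]
      exact ⟨fun h => h2 (by linear_combination -(hinj h)), Or.inl hi⟩
    have := hcyc 0
    rw [hadj] at this
    rcases this.2 with h | h
    · exact key 0 h
    · exact key (0 + 1) h
  · exact fun s hs => by rw [hsize s hs]; omega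
  · rintro ⟨m, rfl⟩
    rw [hsum]
    have hkm : k = m := by omega
    rw [hkm, show 2 * m + 1 - m = m + 1 from by omega]
    ring
  · rintro ⟨m, rfl⟩
    rw [hsum]
    have hkm : k = m - 1 := by omega
    rw [hkm, show m + m - (m - 1) = m + 1 from by omega,
      show m - 1 + 1 = m from by omega]
    have : (m + m + 1) ^ 2 = (m + 1) * m * 4 + 1 := by ring
    omega
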